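/- Threshold lemma: Let F be the multilinear extension of a submodular function f : 2^X → ℝ₊, let y ∈ [0,1]^X, and for λ ∈ [0,1] define T_{>λ}(y) = {i ∈ X : y_i > λ}. Then F(y) ≥ E[f(T_{>λ}(y))] where λ is uniformly random in [0,1]. -/

import Mathlib

open MeasureTheory

def Submodular {X : Type*} [DecidableEq X] (f : Finset X → ℝ) : Prop :=
  ∀ S T : Finset X, f (S ∪ T) + f (S ∩ T) ≤ f S + f T

/-- The multilinear extension of a set function. -/
def mExt {X : Type*} [Fintype X] [DecidableEq X] (f : Finset X → ℝ) (x : X → ℝ) : ℝ :=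
  ∑ S : Finset X, f S * ((∏ i ∈ S, x i) * ∏ j ∈ Sᶜ, (1 - x j))

namespace ThresholdAux
set_option linter.unusedSectionVars false

variable {X : Type*} [Fintype X] [DecidableEq X]

noncomputable def Tset (y : X → ℝ) (t : ℝ) : Finset X := Finset.univ.filter fun i => t < y i

lemma mem_Tset {y : X → ℝ} {t : ℝ} {i : X} : i ∈ Tset y t ↔ t < y i := by
  simp [Tset]

lemma Tset_anti (y : X → ℝ) {s t : ℝ} (h : s ≤ t) : Tset y t ⊆ Tset y s := by
  intro i hi; rw [mem_Tset] at hi ⊢; linarith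

lemma marginal_mono (f : Finset X → ℝ) (hf : Submodular f) {A B : Finset X} {i : X}
    (hBA : B ⊆ A) (hiA : i ∉ A) :
    f (insert i A) - f A ≤ f (insert i B) - f B := by
  have h := hf (insert i B) A
  have h1 : insert i B ∪ A = insert i A := by
    ext j
    simp only [Finset.mem_union, Finset.mem_insert]
    constructor
    · rintro ((rfl | hj) | hj)
      · exact Or.inl rfl
      · exact Or.inr (hBA hj)
      · exact Or.inr hj
    · rintro (rfl | hj)
      · exact Or.inl (Or.inl rfl)
      · exact Or.inr hj
  have h2 : insert i B ∩ A = B := by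
    ext j
    simp only [Finset.mem_inter, Finset.mem_insert]
    constructor
    · rintro ⟨rfl | hj, hjA⟩
      · exact absurd hjA hiA
      · exact hj
    · exact fun hj => ⟨Or.inr hj, hBA hj⟩
  rw [h1, h2] at h
  linarith

lemma measurable_h (f : Finset X → ℝ) (y : X → ℝ) :
    Measurable fun t => f (Tset y t) := by
  have key : (fun t => f (Tset y t))
      = fun t => ∑ A : Finset X, Set.indicator {s : ℝ | Tset y s = A} (fun _ => f A) t := by
    funext t
    rw [Finset.sum_eq_single (Tset y t)]
    · rw [Set.indicator_of_mem]
      exact Set.mem_setOf_eq ▸ rfl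
    · intro A _ hA
      rw [Set.indicator_of_notMem]
      simpa [Set.mem_setOf_eq] using fun h => hA h.symm
    · simp
  rw [key]
  refine Finset.measurable_sum _ fun A _ => Measurable.indicator measurable_const ?_
  have hset : {s : ℝ | Tset y s = A} = ⋂ i : X, {s : ℝ | s < y i ↔ i ∈ A} := by
    ext s
    simp only [Set.mem_setOf_eq, Set.mem_iInter, Finset.ext_iff, mem_Tset]
  rw [hset]
  refine MeasurableSet.iInter fun i => ?_
  by_cases hi : i ∈ A
  · have : {s : ℝ | s < y i ↔ i ∈ A} = Set.Iio (y i) := by ext s; simp [hi]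
    rw [this]; exact measurableSet_Iio
  · have : {s : ℝ | s < y i ↔ i ∈ A} = Set.Ici (y i) := by ext s; simp [hi, not_lt]
    rw [this]; exact measurableSet_Ici

lemma integrableOn_h (f : Finset X → ℝ) (y : X → ℝ) {s : Set ℝ} (hs : volume s ≠ ⊤) :
    IntegrableOn (fun t => f (Tset y t)) s := by
  refine Measure.integrableOn_of_bounded hs (measurable_h f y).aestronglyMeasurable
    (M := ∑ A : Finset X, |f A|) ?_
  filter_upwards with t
  simpa [Real.norm_eq_abs] using
    Finset.single_le_sum (f := fun A : Finset X => |f A|) (fun A _ => abs_nonneg _)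
      (Finset.mem_univ (Tset y t))


lemma mExt_update (f : Finset X → ℝ) (y : X → ℝ) (i : X) :
    mExt f y = y i * mExt f (Function.update y i 1) + (1 - y i) * mExt f (Function.update y i 0) := by
  unfold mExt
  rw [Finset.mul_sum, Finset.mul_sum, ← Finset.sum_add_distrib]
  refine Finset.sum_congr rfl fun S _ => ?_
  by_cases hi : i ∈ S
  · have h0 : ∏ j ∈ S, Function.update y i 0 j = 0 :=
      Finset.prod_eq_zero hi (by simp)
    have h1 : ∏ j ∈ S, Function.update y i 1 j = ∏ j ∈ S.erase i, y j := by
      rw [← Finset.mul_prod_erase S _ hi, Function.update_self, one_mul]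
      exact Finset.prod_congr rfl fun j hj =>
        Function.update_of_ne (Finset.ne_of_mem_erase hj) _ _
    have hy' : ∏ j ∈ S, y j = y i * ∏ j ∈ S.erase i, y j :=
      (Finset.mul_prod_erase S y hi).symm
    have hc : ∀ v : ℝ, ∏ j ∈ Sᶜ, (1 - Function.update y i v j) = ∏ j ∈ Sᶜ, (1 - y j) := by
      intro v
      refine Finset.prod_congr rfl fun j hj => ?_
      have hji : j ≠ i := by rintro rfl; exact (Finset.mem_compl.1 hj) hi
      rw [Function.update_of_ne hji _ _]
    rw [h0, h1, hy', hc, hc]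
    ring
  · have hiC : i ∈ Sᶜ := Finset.mem_compl.2 hi
    have h0 : ∏ j ∈ Sᶜ, (1 - Function.update y i 1 j) = 0 :=
      Finset.prod_eq_zero hiC (by simp)
    have h1c : ∏ j ∈ Sᶜ, (1 - Function.update y i 0 j) = ∏ j ∈ Sᶜ.erase i, (1 - y j) := by
      rw [← Finset.mul_prod_erase Sᶜ _ hiC, Function.update_self]
      rw [show (1 : ℝ) - 0 = 1 by ring, one_mul]
      exact Finset.prod_congr rfl fun j hj => by
        rw [Function.update_of_ne (Finset.ne_of_mem_erase hj) _ _]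
    have hyc : ∏ j ∈ Sᶜ, (1 - y j) = (1 - y i) * ∏ j ∈ Sᶜ.erase i, (1 - y j) :=
      (Finset.mul_prod_erase Sᶜ _ hiC).symm
    have hS : ∀ v : ℝ, ∏ j ∈ S, Function.update y i v j = ∏ j ∈ S, y j := by
      intro v
      refine Finset.prod_congr rfl fun j hj => ?_
      have hji : j ≠ i := by rintro rfl; exact hi hj
      exact Function.update_of_ne hji _ _
    rw [h0, h1c, hyc, hS, hS]
    ring

lemma mExt_boolean (f : Finset X → ℝ) (y : X → ℝ) (hb : ∀ i, y i = 0 ∨ y i = 1) :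
    mExt f y = f (Finset.univ.filter fun i => y i = 1) := by
  set S := Finset.univ.filter fun i => y i = 1 with hS
  unfold mExt
  rw [Finset.sum_eq_single S]
  · have h1 : ∏ i ∈ S, y i = 1 :=
      Finset.prod_eq_one fun i hi => by simpa [hS] using hi
    have h2 : ∏ j ∈ Sᶜ, (1 - y j) = 1 := by
      refine Finset.prod_eq_one fun j hj => ?_
      have : y j ≠ 1 := by simpa [hS] using Finset.mem_compl.1 hj
      rcases hb j with h | h
      · rw [h]; ring
      · exact absurd h this
    rw [h1, h2]; ring
  · intro A _ hA
    have : ∃ i, (i ∈ A ∧ y i = 0) ∨ (i ∉ A ∧ y i = 1) := by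
      by_contra hcon
      push_neg at hcon
      apply hA
      ext i
      simp only [hS, Finset.mem_filter, Finset.mem_univ, true_and]
      obtain ⟨h1, h2⟩ := hcon i
      rcases hb i with h | h
      · constructor
        · intro hiA; exact absurd h (h1 hiA)
        · intro h1'; rw [h] at h1'; norm_num at h1'
      · constructor
        · intro _; exact h
        · intro _; by_contra hiA; exact (h2 hiA) h
    rcases this with ⟨i, ⟨hiA, h0⟩ | ⟨hiA, h1⟩⟩
    · rw [Finset.prod_eq_zero hiA h0]; ring
    · rw [Finset.prod_eq_zero (Finset.mem_compl.2 hiA) (by rw [h1]; ring)]; ring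
  · simp


lemma integral_base (f : Finset X → ℝ) (y : X → ℝ) (hb : ∀ i, y i = 0 ∨ y i = 1) :
    (∫ t in Set.Icc (0:ℝ) 1, f (Tset y t)) = f (Finset.univ.filter fun i => y i = 1) := by
  set S := Finset.univ.filter fun i => y i = 1 with hS
  rw [integral_Icc_eq_integral_Ico]
  have heq : Set.EqOn (fun t => f (Tset y t)) (fun _ => f S) (Set.Ico (0:ℝ) 1) := by
    intro t ht
    have hTS : Tset y t = S := by
      ext j
      rw [mem_Tset]
      simp only [hS, Finset.mem_filter, Finset.mem_univ, true_and]
      rcases hb j with h | h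
      · rw [h]
        constructor
        · intro hlt; exfalso; exact absurd hlt (not_lt.2 ht.1)
        · intro h1; norm_num at h1
      · rw [h]; simp [ht.2]
    simp [hTS]
  rw [setIntegral_congr_fun measurableSet_Ico heq, setIntegral_const]
  simp

lemma main_ineq (f : Finset X → ℝ) (hf : Submodular f) :
    ∀ (n : ℕ) (y : X → ℝ),
      (Finset.univ.filter fun j => y j ∈ Set.Ioo (0:ℝ) 1).card = n →
      (∀ j, y j ∈ Set.Icc (0:ℝ) 1) →
      (∫ t in Set.Icc (0:ℝ) 1, f (Tset y t)) ≤ mExt f y := by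
  intro n
  induction n with
  | zero =>
    intro y hcard hy
    have hb : ∀ j, y j = 0 ∨ y j = 1 := by
      intro j
      have hnot : y j ∉ Set.Ioo (0:ℝ) 1 := by
        intro hmem
        have hj : j ∈ Finset.univ.filter fun j => y j ∈ Set.Ioo (0:ℝ) 1 :=
          Finset.mem_filter.2 ⟨Finset.mem_univ j, hmem⟩
        rw [Finset.card_eq_zero] at hcard
        rw [hcard] at hj
        exact absurd hj (Finset.notMem_empty j)
      rcases (hy j).1.lt_or_eq with h0 | h0
      · rcases (hy j).2.lt_or_eq with h1 | h1
        · exact absurd ⟨h0, h1⟩ hnot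
        · exact Or.inr h1
      · exact Or.inl h0.symm
    rw [integral_base f y hb, mExt_boolean f y hb]
  | succ n ih =>
    intro y hcard hy
    obtain ⟨i, ha0, ha1⟩ : ∃ i, y i ∈ Set.Ioo (0:ℝ) 1 := by
      have hne : (Finset.univ.filter fun j => y j ∈ Set.Ioo (0:ℝ) 1).Nonempty := by
        rw [← Finset.card_pos, hcard]; omega
      obtain ⟨i, hi⟩ := hne
      exact ⟨i, (Finset.mem_filter.1 hi).2⟩
    have hupd0 : ∀ j, j ≠ i → Function.update y i 0 j = y j := fun j hj =>
      Function.update_of_ne hj _ _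
    have hupd1 : ∀ j, j ≠ i → Function.update y i 1 j = y j := fun j hj =>
      Function.update_of_ne hj _ _
    have hy0i : Function.update y i 0 i = 0 := Function.update_self _ _ _
    have hy1i : Function.update y i 1 i = 1 := Function.update_self _ _ _
    have hIcc0 : ∀ j, Function.update y i 0 j ∈ Set.Icc (0:ℝ) 1 := by
      intro j; by_cases hj : j = i
      · subst hj; rw [hy0i]; constructor <;> norm_num
      · rw [hupd0 j hj]; exact hy j
    have hIcc1 : ∀ j, Function.update y i 1 j ∈ Set.Icc (0:ℝ) 1 := by
      intro j; by_cases hj : j = i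
      · subst hj; rw [hy1i]; constructor <;> norm_num
      · rw [hupd1 j hj]; exact hy j
    have hcard' : ∀ (z : X → ℝ), z i ∉ Set.Ioo (0:ℝ) 1 → (∀ j, j ≠ i → z j = y j) →
        (Finset.univ.filter fun j => z j ∈ Set.Ioo (0:ℝ) 1).card = n := by
      intro z hzi hzj
      have hset : (Finset.univ.filter fun j => z j ∈ Set.Ioo (0:ℝ) 1)
          = (Finset.univ.filter fun j => y j ∈ Set.Ioo (0:ℝ) 1).erase i := by
        ext j
        simp only [Finset.mem_filter, Finset.mem_univ, true_and, Finset.mem_erase]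
        by_cases hj : j = i
        · subst hj; simp [hzi]
        · rw [hzj j hj]; tauto
      rw [hset, Finset.card_erase_of_mem (by simp [Set.mem_Ioo, ha0, ha1]), hcard]
      omega
    have hcard0 := hcard' (Function.update y i 0) (by rw [hy0i]; simp) hupd0
    have hcard1 := hcard' (Function.update y i 1) (by rw [hy1i]; simp) hupd1
    have ih0 := ih (Function.update y i 0) hcard0 hIcc0
    have ih1 := ih (Function.update y i 1) hcard1 hIcc1
    have hvIco : ∀ u v : ℝ, volume (Set.Ico u v) ≠ ⊤ := by
      intro u v; rw [Real.volume_Ico]; exact ENNReal.ofReal_ne_top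
    have hvIcc : ∀ u v : ℝ, volume (Set.Icc u v) ≠ ⊤ := by
      intro u v; rw [Real.volume_Icc]; exact ENNReal.ofReal_ne_top
    have hdisj : Disjoint (Set.Ico (0:ℝ) (y i)) (Set.Icc (y i) 1) := by
      rw [Set.disjoint_left]
      rintro t ⟨_, h2⟩ ⟨h3, _⟩; linarith
    have hsplit : ∀ z : X → ℝ,
        (∫ t in Set.Icc (0:ℝ) 1, f (Tset z t))
          = (∫ t in Set.Ico (0:ℝ) (y i), f (Tset z t))
            + ∫ t in Set.Icc (y i) 1, f (Tset z t) := by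
      intro z
      rw [← Set.Ico_union_Icc_eq_Icc ha0.le ha1.le,
        setIntegral_union hdisj measurableSet_Icc
          (integrableOn_h f z (hvIco _ _)) (integrableOn_h f z (hvIcc _ _))]
    have fact3 : ∀ t ∈ Set.Ico (0:ℝ) 1,
        i ∉ Tset (Function.update y i 0) t ∧
          Tset (Function.update y i 1) t = insert i (Tset (Function.update y i 0) t) := by
      intro t ht
      have hni : i ∉ Tset (Function.update y i 0) t := by
        rw [mem_Tset, hy0i]; exact not_lt.2 ht.1
      refine ⟨hni, ?_⟩
      ext j
      rw [mem_Tset, Finset.mem_insert, mem_Tset]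
      by_cases hj : j = i
      · subst hj; rw [hy1i, hy0i]; simp [ht.2]
      · rw [hupd1 j hj, hupd0 j hj]; simp [hj]
    have fact1 : ∀ t ∈ Set.Ico (0:ℝ) (y i), Tset y t = Tset (Function.update y i 1) t := by
      intro t ht
      ext j; rw [mem_Tset, mem_Tset]
      by_cases hj : j = i
      · subst hj; rw [hy1i]
        constructor
        · intro _; linarith [ht.2, ha1]
        · intro _; exact ht.2
      · rw [hupd1 j hj]
    have fact2 : ∀ t ∈ Set.Icc (y i) 1, Tset y t = Tset (Function.update y i 0) t := by
      intro t ht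
      ext j; rw [mem_Tset, mem_Tset]
      by_cases hj : j = i
      · subst hj; rw [hy0i]
        constructor
        · intro h; linarith [ht.1]
        · intro h; linarith [ht.1, ha0]
      · rw [hupd0 j hj]
    have hLy : (∫ t in Set.Icc (0:ℝ) 1, f (Tset y t))
        = (∫ t in Set.Ico (0:ℝ) (y i), f (Tset (Function.update y i 1) t))
          + ∫ t in Set.Icc (y i) 1, f (Tset (Function.update y i 0) t) := by
      rw [hsplit y]
      congr 1
      · exact setIntegral_congr_fun measurableSet_Ico fun t ht => by rw [fact1 t ht]
      · exact setIntegral_congr_fun measurableSet_Icc fun t ht => by rw [fact2 t ht]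
    rw [hsplit (Function.update y i 1)] at ih1
    rw [hsplit (Function.update y i 0)] at ih0
    have hptA : ∀ t ∈ Set.Ico (0:ℝ) (y i),
        f (Tset (Function.update y i 1) t) - f (Tset (Function.update y i 0) t)
          ≤ f (insert i (Tset (Function.update y i 0) (y i)))
            - f (Tset (Function.update y i 0) (y i)) := by
      intro t ht
      have ht' : t ∈ Set.Ico (0:ℝ) 1 := ⟨ht.1, lt_trans ht.2 ha1⟩
      obtain ⟨hni, hins⟩ := fact3 t ht'
      rw [hins]
      exact marginal_mono f hf (Tset_anti _ ht.2.le) hni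
    have hptB : ∀ t ∈ Set.Ico (y i) 1,
        f (insert i (Tset (Function.update y i 0) (y i)))
            - f (Tset (Function.update y i 0) (y i))
          ≤ f (Tset (Function.update y i 1) t) - f (Tset (Function.update y i 0) t) := by
      intro t ht
      have ht' : t ∈ Set.Ico (0:ℝ) 1 := ⟨le_trans ha0.le ht.1, ht.2⟩
      obtain ⟨hni, hins⟩ := fact3 t ht'
      have hnia : i ∉ Tset (Function.update y i 0) (y i) := by
        rw [mem_Tset, hy0i]; exact not_lt.2 ha0.le
      rw [hins]
      exact marginal_mono f hf (Tset_anti _ ht.1) hnia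
    have hIA1 := integrableOn_h f (Function.update y i 1) (hvIco 0 (y i))
    have hIA0 := integrableOn_h f (Function.update y i 0) (hvIco 0 (y i))
    have hIB1 := integrableOn_h f (Function.update y i 1) (hvIco (y i) 1)
    have hIB0 := integrableOn_h f (Function.update y i 0) (hvIco (y i) 1)
    have hDA : (∫ t in Set.Ico (0:ℝ) (y i), f (Tset (Function.update y i 1) t))
        - (∫ t in Set.Ico (0:ℝ) (y i), f (Tset (Function.update y i 0) t))
        = ∫ t in Set.Ico (0:ℝ) (y i),
            (f (Tset (Function.update y i 1) t) - f (Tset (Function.update y i 0) t)) :=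
      (integral_sub hIA1 hIA0).symm
    have hDB : (∫ t in Set.Icc (y i) 1, f (Tset (Function.update y i 1) t))
        - (∫ t in Set.Icc (y i) 1, f (Tset (Function.update y i 0) t))
        = ∫ t in Set.Ico (y i) 1,
            (f (Tset (Function.update y i 1) t) - f (Tset (Function.update y i 0) t)) := by
      rw [integral_Icc_eq_integral_Ico, integral_Icc_eq_integral_Ico]
      exact (integral_sub hIB1 hIB0).symm
    have hDAle : (∫ t in Set.Ico (0:ℝ) (y i), f (Tset (Function.update y i 1) t))
        - (∫ t in Set.Ico (0:ℝ) (y i), f (Tset (Function.update y i 0) t))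
        ≤ (y i) * (f (insert i (Tset (Function.update y i 0) (y i)))
            - f (Tset (Function.update y i 0) (y i))) := by
      rw [hDA]
      calc _ ≤ ∫ _ in Set.Ico (0:ℝ) (y i),
              (f (insert i (Tset (Function.update y i 0) (y i)))
                - f (Tset (Function.update y i 0) (y i))) :=
            setIntegral_mono_on (hIA1.sub hIA0)
              (integrableOn_const (hvIco 0 (y i))) measurableSet_Ico hptA
        _ = _ := by
            rw [setIntegral_const]
            simp [Real.volume_Ico, ENNReal.toReal_ofReal ha0.le, ha0.le]
    have hDBge : (1 - y i) * (f (insert i (Tset (Function.update y i 0) (y i)))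
            - f (Tset (Function.update y i 0) (y i)))
        ≤ (∫ t in Set.Icc (y i) 1, f (Tset (Function.update y i 1) t))
          - ∫ t in Set.Icc (y i) 1, f (Tset (Function.update y i 0) t) := by
      rw [hDB]
      calc (1 - y i) * (f (insert i (Tset (Function.update y i 0) (y i)))
              - f (Tset (Function.update y i 0) (y i)))
          = ∫ _ in Set.Ico (y i) 1,
              (f (insert i (Tset (Function.update y i 0) (y i)))
                - f (Tset (Function.update y i 0) (y i))) := by
            rw [setIntegral_const]
            simp [Real.volume_Ico, ENNReal.toReal_ofReal (by linarith : (0:ℝ) ≤ 1 - y i), ha1.le]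
        _ ≤ _ :=
            setIntegral_mono_on (integrableOn_const (hvIco (y i) 1))
              (hIB1.sub hIB0) measurableSet_Ico hptB
    rw [hLy, mExt_update f y i]
    have s1 : (y i) * ((∫ t in Set.Ico (0:ℝ) (y i), f (Tset (Function.update y i 1) t))
        + ∫ t in Set.Icc (y i) 1, f (Tset (Function.update y i 1) t))
        ≤ (y i) * mExt f (Function.update y i 1) :=
      mul_le_mul_of_nonneg_left ih1 ha0.le
    have s0 : (1 - y i) * ((∫ t in Set.Ico (0:ℝ) (y i), f (Tset (Function.update y i 0) t))
        + ∫ t in Set.Icc (y i) 1, f (Tset (Function.update y i 0) t))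
        ≤ (1 - y i) * mExt f (Function.update y i 0) :=
      mul_le_mul_of_nonneg_left ih0 (by linarith)
    nlinarith [mul_le_mul_of_nonneg_left hDAle (by linarith : (0:ℝ) ≤ 1 - y i),
      mul_le_mul_of_nonneg_left hDBge ha0.le]

end ThresholdAux

/-- Threshold lemma: the multilinear extension dominates the expectation of `f` on the
threshold set `T_{>λ}(y)` for a uniformly random threshold `λ ∈ [0,1]`. -/
theorem threshold_lemma
    {X : Type*} [Fintype X] [DecidableEq X] (f : Finset X → ℝ)
    (hf0 : ∀ S, 0 ≤ f S) (hf : Submodular f)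
    (y : X → ℝ) (hy : ∀ i, y i ∈ Set.Icc (0 : ℝ) 1) :
    (∫ t in Set.Icc (0 : ℝ) 1, f (Finset.univ.filter fun i => t < y i)) ≤ mExt f y :=
  ThresholdAux.main_ineq f hf
    (Finset.univ.filter fun j => y j ∈ Set.Ioo (0:ℝ) 1).card y rfl hy
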